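/- Let d ≥ 1 and m ≥ 2 be integers, let C > 0, and let x_1, …, x_N ∈ ℝ^d satisfy ‖x_n‖₂ ≤ C/2 for all n = 1, …, N. Then E_σ[ sup_{w ∈ ℝ^d, ‖w‖₂ ≤ 1; b ∈ ℝ, |b| ≤ C/2} Σ_{n=1}^N σ_n (⟨w, x_n⟩ − b)^{m−1} ] ≤ √N · C^{m−1}, where the expectation is over σ uniformly distributed on {−1,1}^N (equivalently, 2^{−N} times the sum over all σ ∈ {−1,1}^N). -/

import Mathlib

open scoped InnerProductSpace BigOperators

private lemma sum_pow_tensor {ι : Type*} [Fintype ι] [DecidableEq ι] (p : ℕ) (g : ι → ℝ) :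
    (∑ i, g i) ^ p = ∑ t : Fin p → ι, ∏ j, g (t j) := by
  have h := Finset.prod_univ_sum (fun _ : Fin p => (Finset.univ : Finset ι)) (fun _ b => g b)
  simpa [Finset.prod_const, Finset.card_univ] using h

private lemma cs_sqrt {α : Type*} (s : Finset α) (f g : α → ℝ) :
    ∑ i ∈ s, f i * g i ≤ Real.sqrt (∑ i ∈ s, f i ^ 2) * Real.sqrt (∑ i ∈ s, g i ^ 2) := by
  have h := Finset.sum_mul_sq_le_sq_mul_sq s f g
  have h2 : ∑ i ∈ s, f i * g i ≤ |∑ i ∈ s, f i * g i| := le_abs_self _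
  refine h2.trans ?_
  rw [← Real.sqrt_sq_eq_abs, ← Real.sqrt_mul (Finset.sum_nonneg fun _ _ => sq_nonneg _)]
  exact Real.sqrt_le_sqrt h

private lemma sum_eps_pow_le (p : ℕ) {ι : Type*} [Fintype ι] [DecidableEq ι] {N : ℕ}
    (ε : Fin N → ℝ) (W : ι → ℝ) (Y : Fin N → ι → ℝ) (hW : ∑ i, W i ^ 2 ≤ 2) :
    ∑ n, ε n * (∑ i, W i * Y n i) ^ p
      ≤ Real.sqrt (2 ^ p) *
        Real.sqrt (∑ t : Fin p → ι, (∑ n, ε n * ∏ j, Y n (t j)) ^ 2) := by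
  have key : ∑ n, ε n * (∑ i, W i * Y n i) ^ p
      = ∑ t : Fin p → ι, (∏ j, W (t j)) * (∑ n, ε n * ∏ j, Y n (t j)) := by
    calc ∑ n, ε n * (∑ i, W i * Y n i) ^ p
        = ∑ n, ∑ t : Fin p → ι, ε n * ((∏ j, W (t j)) * ∏ j, Y n (t j)) := by
          refine Finset.sum_congr rfl fun n _ => ?_
          rw [sum_pow_tensor p (fun i => W i * Y n i), Finset.mul_sum]
          refine Finset.sum_congr rfl fun t _ => ?_
          rw [← Finset.prod_mul_distrib]
      _ = ∑ t : Fin p → ι, (∏ j, W (t j)) * (∑ n, ε n * ∏ j, Y n (t j)) := by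
          rw [Finset.sum_comm]
          refine Finset.sum_congr rfl fun t _ => ?_
          rw [Finset.mul_sum]
          exact Finset.sum_congr rfl fun n _ => by ring
  rw [key]
  refine (cs_sqrt _ _ _).trans ?_
  have hsum : ∑ t : Fin p → ι, (∏ j, W (t j)) ^ 2 ≤ 2 ^ p := by
    have e : ∑ t : Fin p → ι, (∏ j, W (t j)) ^ 2 = (∑ i, W i ^ 2) ^ p := by
      rw [sum_pow_tensor p (fun i => W i ^ 2)]
      exact Finset.sum_congr rfl fun t _ => (Finset.prod_pow _ _ _).symm
    rw [e]
    exact pow_le_pow_left₀ (Finset.sum_nonneg fun _ _ => sq_nonneg _) hW p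
  have := Real.sqrt_le_sqrt hsum
  exact mul_le_mul_of_nonneg_right this (Real.sqrt_nonneg _)

private lemma rademacher_sq (N : ℕ) (a : Fin N → ℝ) :
    ∑ σ : Fin N → Bool, (∑ n, (if σ n then (1:ℝ) else -1) * a n) ^ 2
      = 2 ^ N * ∑ n, a n ^ 2 := by
  classical
  have orth : ∀ n m : Fin N, ∑ σ : Fin N → Bool,
      (if σ n then (1:ℝ) else -1) * (if σ m then (1:ℝ) else -1)
      = if n = m then (2:ℝ)^N else 0 := by
    intro n m
    by_cases hnm : n = m
    · subst hnm
      simp only [if_pos rfl]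
      have : ∀ σ : Fin N → Bool,
          (if σ n then (1:ℝ) else -1) * (if σ n then (1:ℝ) else -1) = 1 := by
        intro σ; by_cases h : σ n <;> simp [h]
      rw [Finset.sum_congr rfl fun σ _ => this σ]
      simp [Finset.card_univ]
    · rw [if_neg hnm]
      refine Finset.sum_involution
        (fun σ _ => Function.update σ n (!σ n)) ?_ ?_ (fun _ _ => Finset.mem_univ _) ?_
      · intro σ _
        have h1 : Function.update σ n (!σ n) n = !σ n := Function.update_self _ _ _
        have h2 : Function.update σ n (!σ n) m = σ m := Function.update_of_ne (Ne.symm hnm) _ _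
        rw [h1, h2]
        by_cases h : σ n <;> by_cases h2 : σ m <;> simp [h, h2]
      · intro σ _ _ heq
        have := congrFun heq n
        rw [Function.update_self] at this
        exact (Bool.not_ne_self (σ n)) this
      · intro σ _
        funext i
        by_cases hi : i = n
        · subst hi; simp [Function.update_self]
        · simp [Function.update_of_ne hi]
  calc ∑ σ : Fin N → Bool, (∑ n, (if σ n then (1:ℝ) else -1) * a n) ^ 2
      = ∑ σ : Fin N → Bool, ∑ n, ∑ m,
          ((if σ n then (1:ℝ) else -1) * (if σ m then (1:ℝ) else -1)) * (a n * a m) := by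
        refine Finset.sum_congr rfl fun σ _ => ?_
        rw [sq, Finset.sum_mul_sum]
        refine Finset.sum_congr rfl fun n _ => Finset.sum_congr rfl fun m _ => ?_
        ring
    _ = ∑ n, ∑ m, (∑ σ : Fin N → Bool,
          (if σ n then (1:ℝ) else -1) * (if σ m then (1:ℝ) else -1)) * (a n * a m) := by
        rw [Finset.sum_comm]
        refine Finset.sum_congr rfl fun n _ => ?_
        rw [Finset.sum_comm]
        refine Finset.sum_congr rfl fun m _ => ?_
        rw [Finset.sum_mul]
    _ = ∑ n, ∑ m, (if n = m then (2:ℝ)^N else 0) * (a n * a m) := by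
        refine Finset.sum_congr rfl fun n _ => Finset.sum_congr rfl fun m _ => ?_
        rw [orth n m]
    _ = 2 ^ N * ∑ n, a n ^ 2 := by
        rw [Finset.mul_sum]
        refine Finset.sum_congr rfl fun n _ => ?_
        simp only [ite_mul, zero_mul, Finset.sum_ite_eq, Finset.mem_univ, if_true]
        ring

theorem expected_sup_bound (d m N : ℕ) (hd : 1 ≤ d) (hm : 2 ≤ m) (C : ℝ) (hC : 0 < C)
    (x : Fin N → EuclideanSpace ℝ (Fin d)) (hx : ∀ n, ‖x n‖ ≤ C / 2) :
    ((2 : ℝ) ^ N)⁻¹ * ∑ σ : Fin N → Bool,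
      sSup {r : ℝ | ∃ (w : EuclideanSpace ℝ (Fin d)) (b : ℝ), ‖w‖ ≤ 1 ∧ |b| ≤ C / 2 ∧
        r = ∑ n, (if σ n then (1 : ℝ) else -1) * (⟪w, x n⟫_ℝ - b) ^ (m - 1)}
      ≤ Real.sqrt N * C ^ (m - 1) := by
  classical
  set p := m - 1 with hp
  set Y : Fin N → Option (Fin d) → ℝ := fun n i => i.elim (-(C/2)) (x n) with hYdef
  set Q : (Fin N → Bool) → ℝ := fun σ => ∑ t : Fin p → Option (Fin d),
      (∑ n, (if σ n then (1:ℝ) else -1) * ∏ j, Y n (t j)) ^ 2 with hQdef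
  have hQ0 : ∀ σ, 0 ≤ Q σ := fun σ => Finset.sum_nonneg fun _ _ => sq_nonneg _
  -- squared-sum bound for Y
  have hYsq : ∀ n, ∑ i : Option (Fin d), (Y n i)^2 ≤ C^2/2 := by
    intro n
    rw [Fintype.sum_option]
    have h1 : (Y n none)^2 = C^2/4 := by simp [hYdef]; ring
    have h2 : ∑ a, (Y n (some a))^2 ≤ C^2/4 := by
      have hn := hx n
      rw [EuclideanSpace.norm_eq] at hn
      have hs : ∑ i, ‖x n i‖^2 ≤ (C/2)^2 := by
        have hnn : (0:ℝ) ≤ ∑ i, ‖x n i‖^2 := Finset.sum_nonneg fun _ _ => sq_nonneg _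
        nlinarith [Real.sq_sqrt hnn, Real.sqrt_nonneg (∑ i, ‖x n i‖^2)]
      calc ∑ a, (Y n (some a))^2 = ∑ i, ‖x n i‖^2 := by
            refine Finset.sum_congr rfl fun a _ => ?_
            simp [hYdef, Real.norm_eq_abs, sq_abs]
        _ ≤ (C/2)^2 := hs
        _ = C^2/4 := by ring
    linarith
  -- per-σ bound on the supremum
  have sup_le : ∀ σ : Fin N → Bool,
      sSup {r : ℝ | ∃ (w : EuclideanSpace ℝ (Fin d)) (b : ℝ), ‖w‖ ≤ 1 ∧ |b| ≤ C / 2 ∧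
        r = ∑ n, (if σ n then (1 : ℝ) else -1) * (⟪w, x n⟫_ℝ - b) ^ p}
      ≤ Real.sqrt (2^p) * Real.sqrt (Q σ) := by
    intro σ
    refine Real.sSup_le ?_ (by positivity)
    rintro r ⟨w, b, hw, hb, rfl⟩
    set W : Option (Fin d) → ℝ := fun i => i.elim (2*b/C) w with hWdef
    have hWsq : ∑ i : Option (Fin d), (W i)^2 ≤ 2 := by
      rw [Fintype.sum_option]
      have hb2 : b^2 ≤ C^2/4 := by
        have := abs_le.mp hb
        nlinarith
      have h1 : (W none)^2 ≤ 1 := by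
        simp only [hWdef, Option.elim]
        rw [div_pow, div_le_one (by positivity)]
        nlinarith
      have h2 : ∑ a, (W (some a))^2 ≤ 1 := by
        have hwn := hw
        rw [EuclideanSpace.norm_eq] at hwn
        have hnn : (0:ℝ) ≤ ∑ i, ‖w i‖^2 := Finset.sum_nonneg fun _ _ => sq_nonneg _
        have hs : ∑ i, ‖w i‖^2 ≤ 1 := by
          nlinarith [Real.sq_sqrt hnn, Real.sqrt_nonneg (∑ i, ‖w i‖^2)]
        calc ∑ a, (W (some a))^2 = ∑ i, ‖w i‖^2 := by
              refine Finset.sum_congr rfl fun a _ => ?_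
              simp [hWdef, Real.norm_eq_abs, sq_abs]
          _ ≤ 1 := hs
      linarith
    have hWY : ∀ n, ⟪w, x n⟫_ℝ - b = ∑ i : Option (Fin d), W i * Y n i := by
      intro n
      rw [Fintype.sum_option]
      have hinner : ⟪w, x n⟫_ℝ = ∑ a, w a * x n a := by
        rw [PiLp.inner_apply]
        exact Finset.sum_congr rfl fun a _ => by simp [RCLike.inner_apply, mul_comm]
      have hW0 : W none * Y n none = -b := by
        simp only [hWdef, hYdef, Option.elim]
        field_simp
      have hWa : ∑ a, W (some a) * Y n (some a) = ∑ a, w a * x n a := by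
        exact Finset.sum_congr rfl fun a _ => by simp [hWdef, hYdef]
      rw [hW0, hWa, hinner]; ring
    calc ∑ n, (if σ n then (1:ℝ) else -1) * (⟪w, x n⟫_ℝ - b) ^ p
        = ∑ n, (if σ n then (1:ℝ) else -1) * (∑ i : Option (Fin d), W i * Y n i) ^ p := by
          exact Finset.sum_congr rfl fun n _ => by rw [hWY n]
      _ ≤ Real.sqrt (2^p) * Real.sqrt (Q σ) := by
          exact sum_eps_pow_le p (fun n => if σ n then (1:ℝ) else -1) W Y hWsq
  -- averaging over σ
  have havg : ∑ σ : Fin N → Bool, Real.sqrt (Q σ)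
      ≤ Real.sqrt (2^N) * Real.sqrt (∑ σ : Fin N → Bool, Q σ) := by
    have h := cs_sqrt (Finset.univ : Finset (Fin N → Bool))
      (fun _ => (1:ℝ)) (fun σ => Real.sqrt (Q σ))
    have e1 : ∑ σ : Fin N → Bool, (Real.sqrt (Q σ))^2 = ∑ σ, Q σ :=
      Finset.sum_congr rfl fun σ _ => Real.sq_sqrt (hQ0 σ)
    have e2 : ∑ _σ : Fin N → Bool, (1:ℝ)^2 = 2^N := by
      simp [Finset.card_univ, Fintype.card_fun]
    simpa [e1, e2] using h
  have hQsum : ∑ σ : Fin N → Bool, Q σ ≤ 2^N * ((N:ℝ) * (C^2/2)^p) := by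
    have e : ∑ σ : Fin N → Bool, Q σ
        = 2^N * ∑ t : Fin p → Option (Fin d), ∑ n, (∏ j, Y n (t j))^2 := by
      rw [hQdef]
      rw [Finset.sum_comm, Finset.mul_sum]
      exact Finset.sum_congr rfl fun t _ => rademacher_sq N (fun n => ∏ j, Y n (t j))
    rw [e]
    have hb : ∑ t : Fin p → Option (Fin d), ∑ n, (∏ j, Y n (t j))^2
        ≤ (N:ℝ) * (C^2/2)^p := by
      rw [Finset.sum_comm]
      have step : ∀ n, ∑ t : Fin p → Option (Fin d), (∏ j, Y n (t j))^2 ≤ (C^2/2)^p := by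
        intro n
        have e2 : ∑ t : Fin p → Option (Fin d), (∏ j, Y n (t j))^2
            = (∑ i, (Y n i)^2) ^ p := by
          rw [sum_pow_tensor p (fun i => (Y n i)^2)]
          exact Finset.sum_congr rfl fun t _ => (Finset.prod_pow _ _ _).symm
        rw [e2]
        exact pow_le_pow_left₀ (Finset.sum_nonneg fun _ _ => sq_nonneg _) (hYsq n) p
      calc ∑ n, ∑ t : Fin p → Option (Fin d), (∏ j, Y n (t j))^2
          ≤ ∑ _n : Fin N, (C^2/2)^p := Finset.sum_le_sum fun n _ => step n
        _ = (N:ℝ) * (C^2/2)^p := by simp [Finset.card_univ]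
    have h2N : (0:ℝ) ≤ 2^N := by positivity
    nlinarith [hb]
  -- put it together
  have chain : ((2:ℝ)^N)⁻¹ * ∑ σ : Fin N → Bool,
      sSup {r : ℝ | ∃ (w : EuclideanSpace ℝ (Fin d)) (b : ℝ), ‖w‖ ≤ 1 ∧ |b| ≤ C / 2 ∧
        r = ∑ n, (if σ n then (1 : ℝ) else -1) * (⟪w, x n⟫_ℝ - b) ^ p}
      ≤ ((2:ℝ)^N)⁻¹ * (Real.sqrt (2^p) * (Real.sqrt (2^N) *
          Real.sqrt (2^N * ((N:ℝ) * (C^2/2)^p)))) := by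
    have h1 : ∑ σ : Fin N → Bool,
        sSup {r : ℝ | ∃ (w : EuclideanSpace ℝ (Fin d)) (b : ℝ), ‖w‖ ≤ 1 ∧ |b| ≤ C / 2 ∧
          r = ∑ n, (if σ n then (1 : ℝ) else -1) * (⟪w, x n⟫_ℝ - b) ^ p}
        ≤ ∑ σ : Fin N → Bool, Real.sqrt (2^p) * Real.sqrt (Q σ) :=
      Finset.sum_le_sum fun σ _ => sup_le σ
    have h2 : ∑ σ : Fin N → Bool, Real.sqrt (2^p) * Real.sqrt (Q σ)
        = Real.sqrt (2^p) * ∑ σ : Fin N → Bool, Real.sqrt (Q σ) := by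
      rw [Finset.mul_sum]
    have h3 : Real.sqrt (∑ σ : Fin N → Bool, Q σ)
        ≤ Real.sqrt (2^N * ((N:ℝ) * (C^2/2)^p)) := Real.sqrt_le_sqrt hQsum
    have h4 : ∑ σ : Fin N → Bool, Real.sqrt (Q σ)
        ≤ Real.sqrt (2^N) * Real.sqrt (2^N * ((N:ℝ) * (C^2/2)^p)) :=
      havg.trans (mul_le_mul_of_nonneg_left h3 (Real.sqrt_nonneg _))
    have hinv : (0:ℝ) ≤ ((2:ℝ)^N)⁻¹ := by positivity
    refine mul_le_mul_of_nonneg_left ?_ hinv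
    refine h1.trans ?_
    rw [h2]
    exact mul_le_mul_of_nonneg_left h4 (Real.sqrt_nonneg _)
  refine chain.trans (le_of_eq ?_)
  -- final arithmetic
  have h2Npos : (0:ℝ) < 2^N := by positivity
  rw [Real.sqrt_mul (by positivity : (0:ℝ) ≤ (2:ℝ)^N)]
  rw [show Real.sqrt ((2:ℝ)^N) * (Real.sqrt ((2:ℝ)^N) * Real.sqrt ((N:ℝ) * (C^2/2)^p))
      = (Real.sqrt ((2:ℝ)^N) * Real.sqrt ((2:ℝ)^N)) * Real.sqrt ((N:ℝ) * (C^2/2)^p) by ring]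
  rw [Real.mul_self_sqrt (le_of_lt h2Npos)]
  rw [show ((2:ℝ)^N)⁻¹ * (Real.sqrt ((2:ℝ)^p) * ((2:ℝ)^N * Real.sqrt ((N:ℝ) * (C^2/2)^p)))
      = (((2:ℝ)^N)⁻¹ * (2:ℝ)^N) * (Real.sqrt ((2:ℝ)^p) * Real.sqrt ((N:ℝ) * (C^2/2)^p)) by ring]
  rw [inv_mul_cancel₀ (ne_of_gt h2Npos), one_mul]
  rw [← Real.sqrt_mul (by positivity : (0:ℝ) ≤ (2:ℝ)^p)]
  have hpow : (2:ℝ)^p * (C^2/2)^p = (C^p)^2 := by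
    rw [← mul_pow, show (2:ℝ)*(C^2/2) = C^2 by ring, ← pow_mul, ← pow_mul, mul_comm 2 p]
  rw [show (2:ℝ)^p * ((N:ℝ) * (C^2/2)^p) = (N:ℝ) * ((2:ℝ)^p * (C^2/2)^p) by ring, hpow]
  rw [Real.sqrt_mul (Nat.cast_nonneg N), Real.sqrt_sq (by positivity : (0:ℝ) ≤ C^p)]
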